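/- arXiv:2103.00261 — 2 statements merged into one kernel-verified Lean document; each statement's English description precedes it below -/
import Mathlib

section
/- Let V be a finite-dimensional vector space with a nondegenerate symmetric bilinear form B over an algebraically closed field of characteristic 0, and let f ∈ so(V,B) be nilpotent (i.e. f is B-skew and nilpotent as an endomorphism). Then for every even m, the number of Jordan blocks of f of size m is even. -/
open Matrix
open Module

/-- The number of Jordan blocks of size m of a nilpotent endomorphism f, computed from the
standard rank formula: #blocks of size m = rank f^(m-1) − 2 rank f^m + rank f^(m+1). -/
noncomputable def jordanBlockCount {F V : Type*} [Field F] [AddCommGroup V] [Module F V]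
    (f : Module.End F V) (m : ℕ) : ℕ :=
  Module.finrank F (LinearMap.range (f ^ (m - 1)))
    + Module.finrank F (LinearMap.range (f ^ (m + 1)))
    - 2 * Module.finrank F (LinearMap.range (f ^ m))

section Aux

variable {F : Type*} [Field F] {V : Type*} [AddCommGroup V] [Module F V]

/-- Iterated skew-symmetry relation. -/
lemma skew_pow (B : LinearMap.BilinForm F V) (f : Module.End F V)
    (hskew : ∀ v w, B (f v) w + B v (f w) = 0) (n : ℕ) :
    ∀ v w, B ((f ^ n) v) w = (-1 : F) ^ n * B v ((f ^ n) w) := by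
  induction n with
  | zero => intro v w; simp
  | succ n ih =>
    intro v w
    have h1 : (f ^ (n + 1)) v = (f ^ n) (f v) := by rw [pow_succ]; rfl
    have h2 : (f ^ (n + 1)) w = f ((f ^ n) w) := by rw [pow_succ']; rfl
    have h3 : B (f v) ((f ^ n) w) = - B v (f ((f ^ n) w)) := by
      linear_combination hskew v ((f ^ n) w)
    rw [h1, h2, ih (f v) w, h3]
    ring

/-- A nondegenerate skew-symmetric bilinear form (in characteristic zero) forces even
dimension. -/
lemma even_finrank_of_alt [CharZero F] [FiniteDimensional F V]
    (C : LinearMap.BilinForm F V) (halt : ∀ v w, C v w = - C w v)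
    (hnd : C.Nondegenerate) : Even (finrank F V) := by
  by_contra hodd
  have hodd' : Odd (finrank F V) := Nat.not_even_iff_odd.mp hodd
  classical
  let b := finBasis F V
  let M := LinearMap.BilinForm.toMatrix b C
  have hdet : M.det ≠ 0 := (LinearMap.BilinForm.nondegenerate_iff_det_ne_zero b).mp hnd
  have hTr : M.transpose = -M := by
    ext i j
    simp only [Matrix.transpose_apply, Matrix.neg_apply, M, LinearMap.BilinForm.toMatrix_apply]
    exact halt (b j) (b i)
  have hdd : M.det = - M.det := by
    conv_lhs => rw [← Matrix.det_transpose, hTr, Matrix.det_neg]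
    rw [Fintype.card_fin, hodd'.neg_one_pow]
    ring
  have h0 : (2 : F) * M.det = 0 := by linear_combination hdd
  exact hdet ((mul_eq_zero.mp h0).resolve_left two_ne_zero)

end Aux

/-- For a nilpotent element f of so(V,B) (B nondegenerate symmetric), every even Jordan
block size occurs with even multiplicity. -/
theorem orthogonal_nilpotent_even_blocks_even_multiplicity
    {F : Type*} [Field F] [IsAlgClosed F] [CharZero F]
    {V : Type*} [AddCommGroup V] [Module F V] [FiniteDimensional F V]
    (B : LinearMap.BilinForm F V)
    (hsymm : ∀ v w, B v w = B w v)
    (hnd : ∀ v, (∀ w, B v w = 0) → v = 0)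
    (f : Module.End F V)
    (hskew : ∀ v w, B (f v) w + B v (f w) = 0)
    (hnil : IsNilpotent f) :
    ∀ m : ℕ, 1 ≤ m → Even m → Even (jordanBlockCount f m) := by
  -- Key fact: for odd k, the rank of f^k is even, because the form
  -- C v w := B (f^k v, w) is alternating with radical ker (f^k).
  have key : ∀ k : ℕ, Odd k → Even (finrank F (LinearMap.range (f ^ k))) := by
    intro k hk
    set C : LinearMap.BilinForm F V := B ∘ₗ (f ^ k : Module.End F V) with hCdef
    have hCapp : ∀ v w, C v w = B ((f ^ k) v) w := fun v w => rfl
    have halt : ∀ v w, C v w = - C w v := by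
      intro v w
      rw [hCapp v w, hCapp w v, skew_pow B f hskew k v w, hk.neg_one_pow,
        hsymm v ((f ^ k) w)]
      ring
    have hker : LinearMap.ker C = LinearMap.ker (f ^ k) := by
      ext v
      simp only [LinearMap.mem_ker]
      constructor
      · intro h
        apply hnd
        intro w
        have := congrFun (congrArg DFunLike.coe h) w
        simpa [hCapp] using this
      · intro h
        ext w
        simp [hCapp, h]
    obtain ⟨W, hW⟩ := Submodule.exists_isCompl (LinearMap.ker (f ^ k))
    have haltW : ∀ v w : W, (C.restrict W) v w = - (C.restrict W) w v := by
      intro v w; exact halt v w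
    have hndW : (C.restrict W).Nondegenerate := by
      refine LinearMap.BilinForm.Nondegenerate.ofSeparatingLeft ?_
      intro w hw
      have hmem : (w : V) ∈ LinearMap.ker C := by
        rw [LinearMap.mem_ker]
        ext v
        have hv : v ∈ (LinearMap.ker (f ^ k)) ⊔ W := by
          rw [hW.sup_eq_top]; trivial
        obtain ⟨x, hx, y, hy, rfl⟩ := Submodule.mem_sup.mp hv
        have hx' : C x = 0 := by
          have : x ∈ LinearMap.ker C := by rw [hker]; exact hx
          exact LinearMap.mem_ker.mp this
        have h1 : C (w : V) x = 0 := by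
          rw [halt]
          rw [show C x (w : V) = 0 from by rw [hx']; rfl]
          ring
        have h2 : C (w : V) y = 0 := hw ⟨y, hy⟩
        simp only [map_add, LinearMap.add_apply, LinearMap.zero_apply]
        rw [h1, h2]
      have hmem' : (w : V) ∈ LinearMap.ker (f ^ k) ⊓ W := by
        rw [hker] at hmem
        exact ⟨hmem, w.2⟩
      rw [hW.inf_eq_bot] at hmem'
      exact Subtype.ext hmem'
    have heven : Even (finrank F W) := even_finrank_of_alt (C.restrict W) haltW hndW
    have hrank : finrank F (LinearMap.range (f ^ k)) = finrank F W := by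
      have h1 := LinearMap.finrank_range_add_finrank_ker (f ^ k)
      have h2 := Submodule.finrank_add_eq_of_isCompl hW
      omega
    rw [hrank]; exact heven
  intro m hm hmeven
  unfold jordanBlockCount
  have h1 : Odd (m - 1) := Nat.Even.sub_odd hm hmeven odd_one
  have h2 : Odd (m + 1) := Even.add_one hmeven
  have he : Even (finrank F (LinearMap.range (f ^ (m - 1)))
      + finrank F (LinearMap.range (f ^ (m + 1)))) := (key _ h1).add (key _ h2)
  exact he.tsub (even_two_mul _)
end

section
/- Let V be a finite-dimensional vector space with a nondegenerate skew-symmetric bilinear form ω over an algebraically closed field of characteristic 0, and let f ∈ sp(V,ω) be nilpotent. Then for every odd m, the number of Jordan blocks of f of size m is even. -/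
open Module
open Matrix

/-- A nondegenerate skew-symmetric bilinear form over a field of characteristic zero
lives on an even-dimensional space. -/
lemma even_finrank_of_skew_nondegenerate
    {F : Type*} [Field F] [CharZero F]
    {W : Type*} [AddCommGroup W] [Module F W] [FiniteDimensional F W]
    (B : LinearMap.BilinForm F W)
    (hskew : ∀ v w, B v w = -B w v)
    (hnd : B.Nondegenerate) : Even (Module.finrank F W) := by
  set n := Module.finrank F W with hn
  let b : Basis (Fin n) F W := Module.finBasis F W
  have hdet : (BilinForm.toMatrix b B).det ≠ 0 :=
    (LinearMap.BilinForm.nondegenerate_iff_det_ne_zero b).mp hnd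
  have hT : (BilinForm.toMatrix b B)ᵀ = -(BilinForm.toMatrix b B) := by
    ext i j
    exact (LinearMap.BilinForm.toMatrix_apply (b := b) B j i).trans ((hskew (b j) (b i)).trans
      (congrArg Neg.neg (LinearMap.BilinForm.toMatrix_apply (b := b) B i j).symm))
  rcases Nat.even_or_odd n with h | h
  · exact h
  · exfalso
    have h1 : (BilinForm.toMatrix b B).det =
        -(BilinForm.toMatrix b B).det := by
      conv_lhs => rw [← Matrix.det_transpose, hT]
      rw [Matrix.det_neg, Fintype.card_fin, h.neg_one_pow, neg_one_mul]
    have : (2 : F) * (BilinForm.toMatrix b B).det = 0 := by linear_combination h1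
    exact hdet (by
      rcases mul_eq_zero.mp this with h2 | h2
      · exact absurd h2 two_ne_zero
      · exact h2)

/-- For `f ∈ sp(V, ω)` and `k` even, the rank of `f ^ k` is even. -/
lemma even_rank_pow_of_symplectic
    {F : Type*} [Field F] [CharZero F]
    {V : Type*} [AddCommGroup V] [Module F V] [FiniteDimensional F V]
    (ω : LinearMap.BilinForm F V)
    (hskewform : ∀ v w, ω v w = -ω w v)
    (hnd : ∀ v, (∀ w, ω v w = 0) → v = 0)
    (f : Module.End F V)
    (hskew : ∀ v w, ω (f v) w + ω v (f w) = 0)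
    {k : ℕ} (hk : Even k) :
    Even (Module.finrank F (LinearMap.range (f ^ k))) := by
  -- the iterated skew-adjointness
  have key : ∀ j : ℕ, ∀ v w : V, ω ((f ^ j) v) w = (-1 : F) ^ j * ω v ((f ^ j) w) := by
    intro j
    induction j with
    | zero => intro v w; simp
    | succ j ih =>
      intro v w
      have h1 : (f ^ (j + 1)) v = (f ^ j) (f v) := by
        rw [pow_succ]; rfl
      have h2 : f ((f ^ j) w) = (f ^ (j + 1)) w := by
        rw [pow_succ']; rfl
      have h3 : ω (f v) ((f ^ j) w) = -ω v (f ((f ^ j) w)) :=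
        eq_neg_of_add_eq_zero_left (hskew v ((f ^ j) w))
      rw [h1, ih (f v) w, h3, h2]
      ring
  -- the bilinear form B v w = ω (f^k v) w
  set B : LinearMap.BilinForm F V := ω ∘ₗ (f ^ k : V →ₗ[F] V) with hB
  have hBapp : ∀ v w, B v w = ω ((f ^ k) v) w := fun v w => rfl
  have hBskew : ∀ v w, B v w = -B w v := by
    intro v w
    rw [hBapp, hBapp, key k v w, hk.neg_one_pow, one_mul, hskewform v ((f ^ k) w)]
  -- complement of the kernel
  obtain ⟨W, hW⟩ := Submodule.exists_isCompl (LinearMap.ker (f ^ k : Module.End F V))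
  have hdim : Module.finrank F W = Module.finrank F (LinearMap.range (f ^ k)) := by
    have h1 := Submodule.finrank_add_eq_of_isCompl hW
    have h2 := LinearMap.finrank_range_add_finrank_ker ((f ^ k : Module.End F V) : V →ₗ[F] V)
    omega
  rw [← hdim]
  apply even_finrank_of_skew_nondegenerate (B.restrict W)
  · intro v w
    exact hBskew v w
  · -- nondegeneracy of the restriction
    refine (LinearMap.IsRefl.nondegenerate_iff_separatingLeft (fun x y h => by
      change B (y : V) x = 0; change B (x : V) y = 0 at h; rw [hBskew, h, neg_zero])).mpr ?_
    intro w hw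
    -- B w v = 0 for all v ∈ V
    have hall : ∀ v : V, B (w : V) v = 0 := by
      intro v
      have hv : v ∈ LinearMap.ker (f ^ k : Module.End F V) ⊔ W := by
        rw [hW.sup_eq_top]; trivial
      obtain ⟨x, hx, y, hy, rfl⟩ := Submodule.mem_sup.mp hv
      have hx0 : B (w : V) x = 0 := by
        rw [hBskew, hBapp]
        have : (f ^ k) x = 0 := LinearMap.mem_ker.mp hx
        rw [this]
        simp
      have hy0 : B (w : V) y = 0 := hw ⟨y, hy⟩
      rw [map_add, hx0, hy0, add_zero]
    have hker : (f ^ k) (w : V) = 0 := hnd _ (fun v => hall v)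
    have hmem : (w : V) ∈ LinearMap.ker (f ^ k : Module.End F V) ⊓ W :=
      ⟨LinearMap.mem_ker.mpr hker, w.2⟩
    rw [hW.inf_eq_bot] at hmem
    exact Subtype.ext hmem

/-- For a nilpotent element f of sp(V,ω) (ω nondegenerate skew-symmetric), every odd Jordan
block size occurs with even multiplicity. -/
theorem symplectic_nilpotent_odd_blocks_even_multiplicity
    {F : Type*} [Field F] [IsAlgClosed F] [CharZero F]
    {V : Type*} [AddCommGroup V] [Module F V] [FiniteDimensional F V]
    (ω : LinearMap.BilinForm F V)
    (hskewform : ∀ v w, ω v w = -ω w v)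
    (hnd : ∀ v, (∀ w, ω v w = 0) → v = 0)
    (f : Module.End F V)
    (hskew : ∀ v w, ω (f v) w + ω v (f w) = 0)
    (hnil : IsNilpotent f) :
    ∀ m : ℕ, 1 ≤ m → Odd m → Even (jordanBlockCount f m) := by
  intro m hm hodd
  have h1 : Even (m - 1) := by
    rcases hodd with ⟨r, hr⟩
    exact ⟨r, by omega⟩
  have h2 : Even (m + 1) := by
    rcases hodd with ⟨r, hr⟩
    exact ⟨r + 1, by omega⟩
  obtain ⟨p, hp⟩ := even_rank_pow_of_symplectic ω hskewform hnd f hskew h1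
  obtain ⟨q, hq⟩ := even_rank_pow_of_symplectic ω hskewform hnd f hskew h2
  unfold jordanBlockCount
  exact ⟨p + q - Module.finrank F (LinearMap.range (f ^ m)), by omega⟩
end
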